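/- For all integers ℓ,s,t ≥ 1 and m ≥ 2, the sums F_{(ℓ,m;s,t)}, F_{(ℓ,m−1;s+1,t)} and F_{(ℓ,m−1;s,t)} converge, and (t−m+1) · F_{(ℓ,m;s,t)} = F_{(ℓ,m;s)} + F_{(ℓ,m−1;s+1,t)} − F_{(ℓ,m−1;s,t)}. -/

import Mathlib

open scoped BigOperators

/-- A cell of the plane `ℤ²`. -/
abbrev Cell : Type := ℤ × ℤ

/-- The partial order `⊴` on `ℤ²`: `(a,b) ⊴ (a',b')` iff `a ≥ a'` and `b ≥ b'`. -/
def cellLE (u v : Cell) : Prop := v.1 ≤ u.1 ∧ v.2 ≤ u.2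

/-- The cylinder `C_ω = ℤ²/ℤω`. -/
abbrev Cyl (ω : Cell) : Type := Cell ⧸ AddSubgroup.zmultiples ω

/-- The natural projection `π : ℤ² → C_ω`. -/
def pr (ω : Cell) : Cell → Cyl ω := QuotientAddGroup.mk

/-- The induced relation `⊴` on the cylinder: `x ⊴ y` iff some lifts satisfy `x̃ ⊴ ỹ`. -/
def cylLE (ω : Cell) (x y : Cyl ω) : Prop :=
  ∃ u v : Cell, pr ω u = x ∧ pr ω v = y ∧ cellLE u v

/-- The hook of `x` in a diagram `Θ ⊆ ℤ²`. -/
def hookSet (Θ : Set Cell) (x : Cell) : Set Cell :=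
  Θ ∩ ({y | ∃ k : ℤ, 0 ≤ k ∧ y = x + (k, 0)} ∪ {y | ∃ k : ℤ, 1 ≤ k ∧ y = x + (0, k)})

/-- The hook length of `x` in `Θ`. -/
noncomputable def hookLen (Θ : Set Cell) (x : Cell) : ℕ := (hookSet Θ x).ncard

/-- The hook length of a cell of the cylinder, computed via a lift. -/
noncomputable def cylHook (ω : Cell) (Θ : Set Cell) (x : Cyl ω) : ℕ :=
  hookLen Θ (Quotient.out x)

/-- The `ℤω`-orbit of a cell. -/
def zline (ω y : Cell) : Set Cell := {z | ∃ k : ℤ, z = y + k • ω}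

/-- `S + ℤω`. -/
def perClosure (ω : Cell) (S : Set Cell) : Set Cell := {z | ∃ y ∈ S, ∃ k : ℤ, z = y + k • ω}

/-- Translation of a set of cells by `u`. -/
def shiftSet (u : Cell) (S : Set Cell) : Set Cell := (· + u) '' S

/-- The semi-infinite diagram `λ̄ = {(a,b) : 1 ≤ a ≤ m, b ≤ λ_a}`. -/
def lowerDiag (m : ℤ) (lam : ℤ → ℤ) : Set Cell := {p | 1 ≤ p.1 ∧ p.1 ≤ m ∧ p.2 ≤ lam p.1}

/-- The Young diagram `{(a,b) : 1 ≤ a ≤ m, 1 ≤ b ≤ λ_a}`. -/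
def youngDiag (m : ℤ) (lam : ℤ → ℤ) : Set Cell :=
  {p | 1 ≤ p.1 ∧ p.1 ≤ m ∧ 1 ≤ p.2 ∧ p.2 ≤ lam p.1}

/-- The skew diagram `λ/μ = {(a,b) : 1 ≤ a ≤ m, μ_a < b ≤ λ_a}`. -/
def skewDiag (m : ℤ) (lam mu : ℤ → ℤ) : Set Cell :=
  {p | 1 ≤ p.1 ∧ p.1 ≤ m ∧ mu p.1 < p.2 ∧ p.2 ≤ lam p.1}

/-- The periodic diagram `λ̃ = λ̄ + ℤ(m,−ℓ)`. -/
def perDiag (m l : ℤ) (lam : ℤ → ℤ) : Set Cell := perClosure (m, -l) (lowerDiag m lam)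

/-- The cylindric diagram `λ̂ = π(λ̃)`. -/
def cylDiag (m l : ℤ) (lam : ℤ → ℤ) : Set (Cyl (m, -l)) := pr (m, -l) '' perDiag m l lam

/-- `λ ∈ P_{m,ℓ}`: an `ℓ`-restricted generalized partition of length `m`
(only the values `λ_1, …, λ_m` are relevant). -/
def IsRestricted (m l : ℤ) (lam : ℤ → ℤ) : Prop :=
  (∀ a : ℤ, 1 ≤ a → a < m → lam (a + 1) ≤ lam a) ∧ lam 1 - lam m ≤ l

/-- `y` is a `D`-active cell (with ambient diagram `Θ`). -/
def IsActive (Θ D : Set Cell) (y : Cell) : Prop :=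
  y ∈ D ∧ y + (1, 0) ∈ Θ \ D ∧ y + (0, 1) ∈ Θ \ D ∧ y + (1, 1) ∈ Θ \ D

/-- One elementary excitation inside `Θ`. -/
def exciteStep (Θ D E : Set Cell) : Prop :=
  ∃ y, IsActive Θ D y ∧ E = (D \ {y}) ∪ {y + (1, 1)}

/-- The excited diagrams of `M` in `Θ`. -/
def ExcitedSet (Θ M : Set Cell) : Set (Set Cell) :=
  {D | Relation.ReflTransGen (exciteStep Θ) M D}

/-- One periodic elementary excitation inside `Θ`. -/
def pExciteStep (ω : Cell) (Θ D E : Set Cell) : Prop :=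
  ∃ y, IsActive Θ D y ∧ E = (D \ zline ω y) ∪ zline ω (y + (1, 1))

/-- The periodic excited diagrams of `M` in `Θ`. -/
def PExcitedSet (ω : Cell) (Θ M : Set Cell) : Set (Set Cell) :=
  {D | Relation.ReflTransGen (pExciteStep ω Θ) M D}

/-- The cylindric excited diagrams: images under `π` of the periodic excited diagrams. -/
def CylExcitedSet (ω : Cell) (Θ M : Set Cell) : Set (Set (Cyl ω)) :=
  (fun D => pr ω '' D) '' PExcitedSet ω Θ M

/-- A linear extension of `S` (with respect to a relation `R`): a bijection
`ε : S → {1,…,n}` with `ε x < ε y` whenever `R x y` and `x ≠ y`. -/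
def IsLinExt {α : Type} (R : α → α → Prop) (S : Set α) (n : ℕ) (ε : S → Fin n) : Prop :=
  Function.Bijective ε ∧ ∀ x y : S, R (x : α) (y : α) → (x : α) ≠ (y : α) → ε x < ε y

/-- The number of linear extensions of `S`. -/
noncomputable def linExtCount {α : Type} (R : α → α → Prop) (S : Set α) (n : ℕ) : ℕ :=
  Nat.card {ε : S → Fin n // IsLinExt R S n ε}

/-- A reverse standard tableau on a (skew) diagram `S` of `n` cells. -/
def IsRST (S : Set Cell) (n : ℕ) (ε : S → Fin n) : Prop :=
  Function.Bijective ε ∧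
    (∀ x y : S, (y : Cell) = (x : Cell) + (0, 1) → ε y < ε x) ∧
    (∀ x y : S, (y : Cell) = (x : Cell) + (1, 0) → ε y < ε x)

/-- An `ℓ`-restricted reverse standard tableau on a skew diagram of length `m`. -/
def IsRSTl (m l : ℤ) (S : Set Cell) (n : ℕ) (ε : S → Fin n) : Prop :=
  IsRST S n ε ∧
    ∀ x y : S, (x : Cell).1 = 1 → (y : Cell) = (m, (x : Cell).2 - l) → ε x < ε y

/-- One lattice step: right by `(1,0)` or down by `(0,−1)`. -/
def stepRel (a b : Cell) : Prop := b - a = (1, 0) ∨ b - a = (0, -1)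

/-- `p` is (the list of cells of) a lattice path from `u` to `v`. -/
def IsLatticePathList (u v : Cell) (p : List Cell) : Prop :=
  p.head? = some u ∧ p.getLast? = some v ∧ p.Chain' stepRel

/-- `L(u,v)`: lattice paths from `u` to `v`, identified with their underlying sets of cells. -/
def LPath (u v : Cell) : Set (Set Cell) :=
  {S | ∃ p : List Cell, IsLatticePathList u v p ∧ S = {x | x ∈ p}}

/-- `L_Θ(u,v)`: lattice paths from `u` to `v` contained in `Θ`. -/
def LPathIn (Θ : Set Cell) (u v : Cell) : Set (Set Cell) := {S | S ∈ LPath u v ∧ S ⊆ Θ}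

/-- One lattice step on the cylinder. -/
def cylStep (ω : Cell) (x y : Cyl ω) : Prop :=
  ∃ u v : Cell, pr ω u = x ∧ pr ω v = y ∧ stepRel u v

/-- `S` is a non-intersecting loop of length `n` in the cylinder. -/
def IsNILoop (ω : Cell) (n : ℕ) (S : Set (Cyl ω)) : Prop :=
  ∃ u : ZMod n → Cyl ω, Function.Injective u ∧ S = Set.range u ∧
    ∀ i : ZMod n, cylStep ω (u i) (u (i + 1))

/-- `h^{s,t}_{m,ℓ}(x) = ℓ+m−a−b+dt+s+1` where `x = (a, b−dℓ)` with `2 ≤ b ≤ ℓ+1`, `d ≥ 0`. -/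
def hst (m l s t : ℤ) (x : Cell) : ℤ :=
  l + m - x.1 - x.2 + ((l + 1 - x.2) / l) * (t - l) + s + 1

/-- The hook lengths `h_i` of the bar case: `h_{ℓt+j} = (ℓ+1)t+j = i + (i−1)/ℓ`. -/
def hbar (l i : ℤ) : ℤ := i + (i - 1) / l

/-- The index type of the sum defining `F_{(ℓ,m;s,t)}`: pairs of an `i ≥ 0` and a
lattice path in `L((1,ℓ+1−i),(m,1−i))`. -/
def FstIndex (l m : ℕ) : Type :=
  Σ i : ℕ, ↥(LPath ((1 : ℤ), (l : ℤ) + 1 - (i : ℤ)) ((m : ℤ), 1 - (i : ℤ)))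

/-- The summand `Π_{x ∈ p} 1/h^{s,t}_{m,ℓ}(x)`. -/
noncomputable def FstTerm (l m s t : ℕ) (z : FstIndex l m) : ℝ :=
  ∏ᶠ x ∈ (z.2 : Set Cell), ((hst (m : ℤ) (l : ℤ) (s : ℤ) (t : ℤ) x : ℝ))⁻¹

/-- `F_{(ℓ,m;s,t)} = Σ_{i=0}^∞ Σ_{p ∈ L((1,ℓ+1−i),(m,1−i))} Π_{x ∈ p} 1/h^{s,t}_{m,ℓ}(x)`. -/
noncomputable def Fst (l m s t : ℕ) : ℝ := ∑' z : FstIndex l m, FstTerm l m s t z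

/-- The finite sum `F_{(ℓ,m;s)} = Σ_{p ∈ L((1,ℓ+1),(m,2))} Π_{x ∈ p} 1/(h_{m,ℓ}(x)+s−1)`,
where `h_{m,ℓ}(a,b) = ℓ+m−a−b+2`. -/
noncomputable def Fσ (l m s : ℕ) : ℝ :=
  ∑ᶠ p ∈ LPath ((1 : ℤ), (l : ℤ) + 1) ((m : ℤ), 2),
    ∏ᶠ x ∈ p, (((l : ℝ) + (m : ℝ) - ((x.1 : ℤ) : ℝ) - ((x.2 : ℤ) : ℝ) + 2 + (s : ℝ) - 1))⁻¹


/-! ### Auxiliary lemmas for the proof -/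

section CylAux

open Set Function

lemma stepRel_iff' {a b : Cell} :
    stepRel a b ↔ (b.1 = a.1 + 1 ∧ b.2 = a.2) ∨ (b.1 = a.1 ∧ b.2 = a.2 - 1) := by
  simp only [stepRel, Prod.ext_iff, Prod.fst_sub, Prod.snd_sub]
  constructor
  · rintro (⟨h1, h2⟩ | ⟨h1, h2⟩) <;> [left; right] <;> constructor <;> omega
  · rintro (⟨h1, h2⟩ | ⟨h1, h2⟩) <;> [left; right] <;> constructor <;> omega

lemma stepRel_right (u : Cell) : stepRel u (u + (1, 0)) := by
  left; simp

lemma stepRel_down (u : Cell) : stepRel u (u + (0, -1)) := by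
  right; simp

lemma chain_head_le : ∀ {p : List Cell} {u : Cell}, p.Chain' stepRel → p.head? = some u →
    ∀ x ∈ p, u.1 ≤ x.1 ∧ x.2 ≤ u.2 ∧ (x ∈ p.tail → u.1 - u.2 < x.1 - x.2)
  | [], u, _, hh, _, _ => by simp at hh
  | a :: q, u, hc, hh, x, hx => by
    rw [List.head?_cons, Option.some.injEq] at hh
    subst hh
    rcases List.mem_cons.mp hx with rfl | hxq
    · refine ⟨le_refl _, le_refl _, fun hxt => ?_⟩
      rcases q with _ | ⟨b, q'⟩
      · simp at hxt
      · have h1 := (List.isChain_cons_cons.mp hc).1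
        have IH := chain_head_le (List.isChain_cons_cons.mp hc).2 rfl _ hxt
        rcases stepRel_iff'.mp h1 with ⟨e1, e2⟩ | ⟨e1, e2⟩ <;> omega
    · rcases q with _ | ⟨b, q'⟩
      · simp at hxq
      · have h1 := (List.isChain_cons_cons.mp hc).1
        have IH := chain_head_le (List.isChain_cons_cons.mp hc).2 rfl x hxq
        obtain ⟨i1, i2, _⟩ := IH
        rcases stepRel_iff'.mp h1 with ⟨e1, e2⟩ | ⟨e1, e2⟩ <;>
          exact ⟨by omega, by omega, fun _ => by omega⟩

lemma chain_last_le : ∀ {p : List Cell} {v : Cell}, p.Chain' stepRel → p.getLast? = some v →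
    ∀ x ∈ p, x.1 ≤ v.1 ∧ v.2 ≤ x.2
  | [], v, _, hl, _, _ => by simp at hl
  | a :: q, v, hc, hl, x, hx => by
    rcases q with _ | ⟨b, q'⟩
    · simp only [List.getLast?_singleton, Option.some.injEq] at hl
      subst hl
      rcases List.mem_singleton.mp hx with rfl
      exact ⟨le_refl _, le_refl _⟩
    · rw [List.getLast?_cons_cons] at hl
      have h1 := (List.isChain_cons_cons.mp hc).1
      have hc' := (List.isChain_cons_cons.mp hc).2
      rcases List.mem_cons.mp hx with rfl | hxq
      · have IH := chain_last_le hc' hl b List.mem_cons_self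
        rcases stepRel_iff'.mp h1 with ⟨e1, e2⟩ | ⟨e1, e2⟩ <;>
          exact ⟨by omega, by omega⟩
      · exact chain_last_le hc' hl x hxq

lemma lpath_mem_left {u v : Cell} {S : Set Cell} (h : S ∈ LPath u v) : u ∈ S := by
  obtain ⟨p, ⟨hh, hl, hc⟩, rfl⟩ := h
  exact List.mem_of_mem_head? (Option.mem_def.mpr hh)

lemma lpath_mem_right {u v : Cell} {S : Set Cell} (h : S ∈ LPath u v) : v ∈ S := by
  obtain ⟨p, ⟨hh, hl, hc⟩, rfl⟩ := h
  exact List.mem_of_mem_getLast? (Option.mem_def.mpr hl)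

lemma lpath_bounds {u v : Cell} {S : Set Cell} (h : S ∈ LPath u v) :
    ∀ x ∈ S, u.1 ≤ x.1 ∧ x.1 ≤ v.1 ∧ v.2 ≤ x.2 ∧ x.2 ≤ u.2 := by
  obtain ⟨p, ⟨hh, hl, hc⟩, rfl⟩ := h
  intro x hx
  have h1 := chain_head_le hc hh x hx
  have h2 := chain_last_le hc hl x hx
  exact ⟨h1.1, h2.1, h2.2, h1.2.1⟩

lemma lpath_subset_box {u v : Cell} {S : Set Cell} (h : S ∈ LPath u v) :
    S ⊆ (Set.Icc u.1 v.1) ×ˢ (Set.Icc v.2 u.2) := by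
  intro x hx
  obtain ⟨h1, h2, h3, h4⟩ := lpath_bounds h x hx
  exact ⟨⟨h1, h2⟩, ⟨h3, h4⟩⟩

lemma lpath_mem_finite {u v : Cell} {S : Set Cell} (h : S ∈ LPath u v) : S.Finite :=
  Set.Finite.subset (((Set.finite_Icc _ _).prod (Set.finite_Icc _ _))) (lpath_subset_box h)

lemma lpath_finite (u v : Cell) : (LPath u v).Finite := by
  refine Set.Finite.subset (Set.Finite.finite_subsets
    (((Set.finite_Icc u.1 v.1).prod (Set.finite_Icc v.2 u.2)))) ?_
  intro S hS
  exact lpath_subset_box hS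

lemma lpath_empty_of {u v : Cell} (h : v.1 < u.1 ∨ u.2 < v.2) : LPath u v = ∅ := by
  ext S
  simp only [Set.mem_empty_iff_false, iff_false]
  intro hS
  have h1 := lpath_bounds hS u (lpath_mem_left hS)
  omega

lemma lpath_self (u : Cell) : LPath u u = {({u} : Set Cell)} := by
  ext S
  constructor
  · rintro ⟨p, ⟨hh, hl, hc⟩, rfl⟩
    rcases p with _ | ⟨a, q⟩
    · simp at hh
    · rw [List.head?_cons, Option.some.injEq] at hh
      subst hh
      rcases q with _ | ⟨b, q'⟩
      · simp
      · exfalso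
        rw [List.getLast?_cons_cons] at hl
        have hu : a ∈ (b :: q') := List.mem_of_mem_getLast? (Option.mem_def.mpr hl)
        have h2 := chain_head_le hc rfl a (List.mem_cons_of_mem _ hu)
        have g4 := h2.2.2 hu
        omega
  · rintro rfl
    exact ⟨[u], ⟨rfl, rfl, List.isChain_singleton u⟩, by simp⟩

lemma lpath_not_mem {u w v : Cell} {S : Set Cell}
    (hw : w = u + (1, 0) ∨ w = u + (0, -1)) (hS : S ∈ LPath w v) : u ∉ S := by
  intro hu
  have h1 := lpath_bounds hS u hu
  rcases hw with rfl | rfl <;> simp [Prod.fst_add, Prod.snd_add] at h1 <;> omega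

lemma lpath_decomp {u v : Cell} (h : u ≠ v) :
    LPath u v = (insert u) '' (LPath (u + (1, 0)) v ∪ LPath (u + (0, -1)) v) := by
  ext S
  constructor
  · rintro ⟨p, ⟨hh, hl, hc⟩, rfl⟩
    rcases p with _ | ⟨a, q⟩
    · simp at hh
    · rw [List.head?_cons, Option.some.injEq] at hh
      subst hh
      rcases q with _ | ⟨b, q'⟩
      · exfalso
        simp only [List.getLast?_singleton, Option.some.injEq] at hl
        exact h hl
      · rw [List.getLast?_cons_cons] at hl
        have h1 := (List.isChain_cons_cons.mp hc).1
        have hc' := (List.isChain_cons_cons.mp hc).2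
        have hmem : {x | x ∈ b :: q'} ∈ LPath b v := ⟨b :: q', ⟨rfl, hl, hc'⟩, rfl⟩
        have hb : b = a + (1, 0) ∨ b = a + (0, -1) := by
          rcases stepRel_iff'.mp h1 with ⟨e1, e2⟩ | ⟨e1, e2⟩
          · left; ext
            · simpa using e1
            · simpa using e2
          · right; ext
            · simpa using e1
            · simpa [sub_eq_add_neg] using e2
        refine ⟨{x | x ∈ b :: q'}, ?_, ?_⟩
        · rcases hb with rfl | rfl
          · exact Or.inl hmem
          · exact Or.inr hmem
        · ext x
          simp [List.mem_cons, Set.mem_insert_iff]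
  · rintro ⟨S', hS', rfl⟩
    have hw : ∃ w, (w = u + (1, 0) ∨ w = u + (0, -1)) ∧ S' ∈ LPath w v := by
      rcases hS' with hS' | hS'
      · exact ⟨_, Or.inl rfl, hS'⟩
      · exact ⟨_, Or.inr rfl, hS'⟩
    obtain ⟨w, hw, hS'w⟩ := hw
    obtain ⟨q, ⟨hh, hl, hc⟩, rfl⟩ := hS'w
    rcases q with _ | ⟨b, q'⟩
    · simp at hh
    · rw [List.head?_cons, Option.some.injEq] at hh
      subst hh
      refine ⟨u :: b :: q', ⟨rfl, by rw [List.getLast?_cons_cons]; exact hl, ?_⟩, ?_⟩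
      · refine List.isChain_cons_cons.mpr ⟨?_, hc⟩
        rcases hw with rfl | rfl
        · exact stepRel_right u
        · exact stepRel_down u
      · ext x
        simp [List.mem_cons, Set.mem_insert_iff]

lemma lpath_disjoint {u v : Cell} :
    Disjoint (LPath (u + (1, 0)) v) (LPath (u + (0, -1)) v) := by
  rw [Set.disjoint_left]
  intro S h1 h2
  have hm : u + (0, -1) ∈ S := lpath_mem_left h2
  have hb := lpath_bounds h1 _ hm
  simp [Prod.fst_add, Prod.snd_add] at hb

lemma finsum_mem_mul_left {s : Set (Set Cell)} (hs : s.Finite) (c : ℝ) (F : Set Cell → ℝ) :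
    ∑ᶠ S ∈ s, c * F S = c * ∑ᶠ S ∈ s, F S := by
  rw [finsum_mem_eq_finite_toFinset_sum _ hs, finsum_mem_eq_finite_toFinset_sum _ hs,
    Finset.mul_sum]

lemma pathSum_first (g : Cell → ℝ) {u v : Cell} (h : u ≠ v) :
    (∑ᶠ S ∈ LPath u v, ∏ᶠ x ∈ S, g x)
      = g u * ((∑ᶠ S ∈ LPath (u + (1, 0)) v, ∏ᶠ x ∈ S, g x)
          + ∑ᶠ S ∈ LPath (u + (0, -1)) v, ∏ᶠ x ∈ S, g x) := by
  rw [lpath_decomp h]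
  have hinj : Set.InjOn (insert u) (LPath (u + (1, 0)) v ∪ LPath (u + (0, -1)) v) := by
    intro S1 h1 S2 h2 he
    have hu1 : u ∉ S1 := by
      rcases h1 with h1 | h1
      · exact lpath_not_mem (Or.inl rfl) h1
      · exact lpath_not_mem (Or.inr rfl) h1
    have hu2 : u ∉ S2 := by
      rcases h2 with h2 | h2
      · exact lpath_not_mem (Or.inl rfl) h2
      · exact lpath_not_mem (Or.inr rfl) h2
    ext x
    constructor
    · intro hx
      have : x ∈ insert u S2 := he ▸ Set.mem_insert_iff.mpr (Or.inr hx)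
      rcases Set.mem_insert_iff.mp this with rfl | hx2
      · exact absurd hx hu1
      · exact hx2
    · intro hx
      have : x ∈ insert u S1 := he.symm ▸ Set.mem_insert_iff.mpr (Or.inr hx)
      rcases Set.mem_insert_iff.mp this with rfl | hx1
      · exact absurd hx hu2
      · exact hx1
  rw [finsum_mem_image hinj]
  have hcongr : ∀ S ∈ LPath (u + (1, 0)) v ∪ LPath (u + (0, -1)) v,
      (∏ᶠ x ∈ insert u S, g x) = g u * ∏ᶠ x ∈ S, g x := by
    intro S hS
    have hu : u ∉ S := by
      rcases hS with hS | hS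
      · exact lpath_not_mem (Or.inl rfl) hS
      · exact lpath_not_mem (Or.inr rfl) hS
    have hfin : S.Finite := by
      rcases hS with hS | hS
      · exact lpath_mem_finite hS
      · exact lpath_mem_finite hS
    exact finprod_mem_insert g hu hfin
  rw [finsum_mem_congr rfl hcongr,
    finsum_mem_union lpath_disjoint (lpath_finite _ _) (lpath_finite _ _),
    finsum_mem_mul_left (lpath_finite _ _), finsum_mem_mul_left (lpath_finite _ _), mul_add]

lemma lpath_image {f : Cell → Cell} (hf : ∀ a b, stepRel a b → stepRel (f a) (f b))
    {u v : Cell} {S : Set Cell} (hS : S ∈ LPath u v) : f '' S ∈ LPath (f u) (f v) := by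
  obtain ⟨p, ⟨hh, hl, hc⟩, rfl⟩ := hS
  refine ⟨p.map f, ⟨?_, ?_, ?_⟩, ?_⟩
  · rw [List.head?_map, hh]; rfl
  · rw [List.getLast?_map, hl]; rfl
  · exact (List.isChain_map f).mpr (hc.imp (fun a b hab => hf a b hab))
  · ext x; simp [List.mem_map, Set.mem_image]

lemma lpath_reverse_neg {u v : Cell} {S : Set Cell} (hS : S ∈ LPath u v) :
    (fun x : Cell => -x) '' S ∈ LPath (-v) (-u) := by
  obtain ⟨p, ⟨hh, hl, hc⟩, rfl⟩ := hS
  refine ⟨(p.map (fun x => -x)).reverse, ⟨?_, ?_, ?_⟩, ?_⟩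
  · rw [List.head?_reverse, List.getLast?_map, hl]; rfl
  · rw [List.getLast?_reverse, List.head?_map, hh]; rfl
  · show List.IsChain stepRel _
    rw [List.isChain_reverse]
    refine (List.isChain_map _).mpr (hc.imp (fun a b hab => ?_))
    show stepRel (-b) (-a)
    unfold stepRel at hab ⊢
    rw [neg_sub_neg]
    exact hab
  · ext x; simp [List.mem_reverse, List.mem_map, Set.mem_image]

lemma lpath_neg_eq (u v : Cell) :
    LPath (-v) (-u) = (fun S : Set Cell => (fun x : Cell => -x) '' S) '' LPath u v := by
  ext T
  constructor
  · intro hT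
    refine ⟨(fun x : Cell => -x) '' T, ?_, ?_⟩
    · have := lpath_reverse_neg hT
      simpa using this
    · simp [Set.image_image]
  · rintro ⟨S, hS, rfl⟩
    exact lpath_reverse_neg hS

lemma lpath_shift_eq (u v e : Cell) :
    LPath (u + e) (v + e) = (fun S : Set Cell => (fun x : Cell => x + e) '' S) '' LPath u v := by
  have hstep : ∀ e : Cell, ∀ a b : Cell, stepRel a b → stepRel (a + e) (b + e) := by
    intro e a b hab
    unfold stepRel at hab ⊢
    rw [add_sub_add_right_eq_sub]
    exact hab
  ext T
  constructor
  · intro hT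
    refine ⟨(fun x : Cell => x + -e) '' T, ?_, ?_⟩
    · have := lpath_image (hstep (-e)) hT
      simpa using this
    · show (fun x : Cell => x + e) '' ((fun x : Cell => x + -e) '' T) = T
      rw [Set.image_image]
      simp only [neg_add_cancel_right, Set.image_id']
  · rintro ⟨S, hS, rfl⟩
    exact lpath_image (hstep e) hS

lemma pathSum_reindex {φ : Cell → Cell} (hinj : Function.Injective φ) {u v u' v' : Cell}
    (heq : LPath u' v' = (fun S : Set Cell => φ '' S) '' LPath u v) (g : Cell → ℝ) :
    (∑ᶠ S ∈ LPath u' v', ∏ᶠ x ∈ S, g x) = ∑ᶠ S ∈ LPath u v, ∏ᶠ x ∈ S, g (φ x) := by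
  rw [heq, finsum_mem_image ((Set.image_injective.mpr hinj).injOn)]
  exact finsum_mem_congr rfl (fun S _ => finprod_mem_image hinj.injOn)

lemma pathSum_shift (u v e : Cell) (g : Cell → ℝ) :
    (∑ᶠ S ∈ LPath (u + e) (v + e), ∏ᶠ x ∈ S, g x)
      = ∑ᶠ S ∈ LPath u v, ∏ᶠ x ∈ S, g (x + e) :=
  pathSum_reindex (fun a b hab => by simpa using congrArg (· + -e) hab)
    (lpath_shift_eq u v e) g

lemma pathSum_neg (u v : Cell) (g : Cell → ℝ) :
    (∑ᶠ S ∈ LPath (-v) (-u), ∏ᶠ x ∈ S, g x) = ∑ᶠ S ∈ LPath u v, ∏ᶠ x ∈ S, g (-x) :=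
  pathSum_reindex neg_injective (lpath_neg_eq u v) g

lemma pathSum_last (g : Cell → ℝ) {u v : Cell} (h : u ≠ v) :
    (∑ᶠ S ∈ LPath u v, ∏ᶠ x ∈ S, g x)
      = g v * ((∑ᶠ S ∈ LPath u (v - (1, 0)), ∏ᶠ x ∈ S, g x)
          + ∑ᶠ S ∈ LPath u (v + (0, 1)), ∏ᶠ x ∈ S, g x) := by
  have fix : ∀ (w z : Cell), (∑ᶠ S ∈ LPath w z, ∏ᶠ x ∈ S, g (- -x))
      = ∑ᶠ S ∈ LPath w z, ∏ᶠ x ∈ S, g x := fun w z =>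
    finsum_mem_congr rfl (fun S _ => finprod_mem_congr rfl (fun x _ => by rw [neg_neg]))
  have h1 : (∑ᶠ S ∈ LPath u v, ∏ᶠ x ∈ S, g x)
      = ∑ᶠ S ∈ LPath (-v) (-u), ∏ᶠ x ∈ S, g (-x) :=
    ((pathSum_neg u v (fun x => g (-x))).trans (fix u v)).symm
  rw [h1, pathSum_first (fun x => g (-x))
    (show (-v) ≠ (-u) from fun hh => h (neg_injective hh).symm)]
  have e1 : -v + ((1 : ℤ), (0 : ℤ)) = -(v - (1, 0)) := by ring
  have e2 : -v + ((0 : ℤ), (-1 : ℤ)) = -(v + (0, 1)) := by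
    have h01 : ((0 : ℤ), (-1 : ℤ)) = -((0 : ℤ), (1 : ℤ)) := by decide
    rw [h01]; ring
  rw [e1, e2]
  have h2 := (pathSum_neg u (v - (1, 0)) (fun x => g (-x))).trans (fix u (v - (1, 0)))
  have h3 := (pathSum_neg u (v + (0, 1)) (fun x => g (-x))).trans (fix u (v + (0, 1)))
  rw [h2, h3, neg_neg]

end CylAux


section CylAux2

open Set Function

/-- `hst` in normal form: `(m−a) + s + n % l + (n/l)·t` with `n = l+1−b`. -/
lemma hst_eval (m l s t : ℤ) (x : Cell) :
    hst m l s t x = (m - x.1) + s + (l + 1 - x.2) % l + ((l + 1 - x.2) / l) * t := by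
  have h := Int.mul_ediv_add_emod (l + 1 - x.2) l
  unfold hst
  linear_combination -h

lemma hst_ge_one {m l s t : ℤ} (hl : 1 ≤ l) (hs : 1 ≤ s) (ht : 1 ≤ t) {x : Cell}
    (hx1 : x.1 ≤ m) (hx2 : x.2 ≤ l + 1) : 1 ≤ hst m l s t x := by
  rw [hst_eval]
  have h1 : 0 ≤ (l + 1 - x.2) % l := Int.emod_nonneg _ (by omega)
  have h2 : 0 ≤ (l + 1 - x.2) / l := Int.ediv_nonneg (by omega) (by omega)
  have h3 : 0 ≤ ((l + 1 - x.2) / l) * t := mul_nonneg h2 (by omega)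
  linarith

lemma hst_mul_ge {m l s t : ℤ} (hl : 1 ≤ l) (hs : 1 ≤ s) (ht : 1 ≤ t) {x : Cell}
    (hx1 : x.1 ≤ m) {i : ℤ} (h0 : 0 ≤ l + 1 - x.2) (hin : i ≤ l + 1 - x.2) :
    i + 1 ≤ l * hst m l s t x := by
  rw [hst_eval]
  set n := l + 1 - x.2 with hn
  have e := Int.mul_ediv_add_emod n l
  have h1 : 0 ≤ n % l := Int.emod_nonneg _ (by omega)
  have h2 : 0 ≤ n / l := Int.ediv_nonneg h0 (by omega)
  have hln : 0 ≤ l * (n / l) := mul_nonneg (by omega) h2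
  have p1 : l * (n / l) ≤ l * (n / l) * t := le_mul_of_one_le_right hln ht
  have p2 : n % l ≤ l * (n % l) := le_mul_of_one_le_left h1 hl
  have p3 : 0 ≤ l * (m - x.1) := mul_nonneg (by omega) (by omega)
  have p4 : l * 1 ≤ l * s := mul_le_mul_of_nonneg_left hs (by omega)
  have expand : l * ((m - x.1) + s + n % l + (n / l) * t)
      = l * (m - x.1) + l * s + l * (n % l) + l * (n / l) * t := by ring
  rw [expand]
  linarith

lemma hst_real_pos {m l s t : ℤ} (hl : 1 ≤ l) (hs : 1 ≤ s) (ht : 1 ≤ t) {x : Cell}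
    (hx1 : x.1 ≤ m) (hx2 : x.2 ≤ l + 1) : (0 : ℝ) < ((hst m l s t x : ℤ) : ℝ) := by
  have := hst_ge_one hl hs ht hx1 hx2
  exact_mod_cast lt_of_lt_of_le zero_lt_one (by exact_mod_cast this)

lemma wgt_le_one {m l s t : ℤ} (hl : 1 ≤ l) (hs : 1 ≤ s) (ht : 1 ≤ t) {x : Cell}
    (hx1 : x.1 ≤ m) (hx2 : x.2 ≤ l + 1) : ((hst m l s t x : ℤ) : ℝ)⁻¹ ≤ 1 := by
  have h := hst_ge_one hl hs ht hx1 hx2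
  have h' : (1 : ℝ) ≤ ((hst m l s t x : ℤ) : ℝ) := by exact_mod_cast h
  exact inv_le_one_of_one_le₀ h'

lemma wgt_le {m l s t : ℤ} (hl : 1 ≤ l) (hs : 1 ≤ s) (ht : 1 ≤ t) {x : Cell}
    (hx1 : x.1 ≤ m) {i : ℤ} (hi : 0 ≤ i) (hin : i ≤ l + 1 - x.2) :
    ((hst m l s t x : ℤ) : ℝ)⁻¹ ≤ (l : ℝ) / ((i : ℝ) + 1) := by
  have hmul : i + 1 ≤ l * hst m l s t x := hst_mul_ge hl hs ht hx1 (by omega) hin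
  have hx2 : x.2 ≤ l + 1 := by omega
  have hpos := hst_real_pos hl hs ht hx1 hx2
  have hil : (0 : ℝ) < (i : ℝ) + 1 := by positivity
  rw [inv_eq_one_div, div_le_div_iff₀ hpos hil]
  have hcast : ((i : ℝ) + 1) ≤ (l : ℝ) * ((hst m l s t x : ℤ) : ℝ) := by exact_mod_cast hmul
  linarith

lemma finprod_wgt_le {m l s t : ℤ} (hl : 1 ≤ l) (hs : 1 ≤ s) (ht : 1 ≤ t)
    {u v : Cell} {S : Set Cell} (hS : S ∈ LPath u v)
    (hv1 : v.1 ≤ m) (hu2 : u.2 ≤ l + 1) (huv : u ≠ v)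
    {i : ℤ} (hi : 0 ≤ i) (hiu : i ≤ l + 1 - u.2) (hiv : i ≤ l + 1 - v.2) :
    (∏ᶠ x ∈ S, ((hst m l s t x : ℤ) : ℝ)⁻¹) ≤ ((l : ℝ) / ((i : ℝ) + 1)) ^ 2 := by
  have hfin := lpath_mem_finite hS
  rw [finprod_mem_eq_finite_toFinset_prod _ hfin]
  have hbox : ∀ x ∈ hfin.toFinset, x.1 ≤ m ∧ x.2 ≤ l + 1 := by
    intro x hx
    have hb := lpath_bounds hS x (hfin.mem_toFinset.mp hx)
    omega
  have hmemu : u ∈ hfin.toFinset := hfin.mem_toFinset.mpr (lpath_mem_left hS)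
  have hmemv : v ∈ hfin.toFinset := hfin.mem_toFinset.mpr (lpath_mem_right hS)
  have hsub : ({u, v} : Finset Cell) ⊆ hfin.toFinset := by
    intro x hx
    rcases Finset.mem_insert.mp hx with rfl | hx
    · exact hmemu
    · rw [Finset.mem_singleton] at hx; subst hx; exact hmemv
  have key := Finset.prod_sdiff (f := fun x => ((hst m l s t x : ℤ) : ℝ)⁻¹) hsub
  have h1 : (∏ x ∈ hfin.toFinset \ {u, v}, ((hst m l s t x : ℤ) : ℝ)⁻¹) ≤ 1 := by
    apply Finset.prod_le_one
    · intro x hx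
      have hb := hbox x (Finset.mem_sdiff.mp hx).1
      exact le_of_lt (inv_pos.mpr (hst_real_pos hl hs ht hb.1 hb.2))
    · intro x hx
      have hb := hbox x (Finset.mem_sdiff.mp hx).1
      exact wgt_le_one hl hs ht hb.1 hb.2
  have h2 : (∏ x ∈ ({u, v} : Finset Cell), ((hst m l s t x : ℤ) : ℝ)⁻¹)
      = ((hst m l s t u : ℤ) : ℝ)⁻¹ * ((hst m l s t v : ℤ) : ℝ)⁻¹ :=
    Finset.prod_pair huv
  have h3 : 0 ≤ (∏ x ∈ ({u, v} : Finset Cell), ((hst m l s t x : ℤ) : ℝ)⁻¹) := by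
    apply Finset.prod_nonneg
    intro x hx
    have hb := hbox x (hsub hx)
    exact le_of_lt (inv_pos.mpr (hst_real_pos hl hs ht hb.1 hb.2))
  have hub := lpath_bounds hS u (lpath_mem_left hS)
  have hvb := lpath_bounds hS v (lpath_mem_right hS)
  have hu : ((hst m l s t u : ℤ) : ℝ)⁻¹ ≤ (l : ℝ) / ((i : ℝ) + 1) :=
    wgt_le hl hs ht (by omega) hi hiu
  have hv : ((hst m l s t v : ℤ) : ℝ)⁻¹ ≤ (l : ℝ) / ((i : ℝ) + 1) :=
    wgt_le hl hs ht hv1 hi hiv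
  calc (∏ x ∈ hfin.toFinset, ((hst m l s t x : ℤ) : ℝ)⁻¹)
      = (∏ x ∈ hfin.toFinset \ {u, v}, ((hst m l s t x : ℤ) : ℝ)⁻¹)
          * ∏ x ∈ ({u, v} : Finset Cell), ((hst m l s t x : ℤ) : ℝ)⁻¹ := key.symm
    _ ≤ 1 * ∏ x ∈ ({u, v} : Finset Cell), ((hst m l s t x : ℤ) : ℝ)⁻¹ :=
        mul_le_mul_of_nonneg_right h1 h3
    _ = ((hst m l s t u : ℤ) : ℝ)⁻¹ * ((hst m l s t v : ℤ) : ℝ)⁻¹ := by rw [one_mul, h2]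
    _ ≤ ((l : ℝ) / ((i : ℝ) + 1)) ^ 2 := by
        have hnn : 0 ≤ ((hst m l s t v : ℤ) : ℝ)⁻¹ :=
          le_of_lt (inv_pos.mpr (hst_real_pos hl hs ht hv1 (by omega)))
        have hnn2 : (0 : ℝ) ≤ (l : ℝ) / ((i : ℝ) + 1) := by positivity
        rw [sq]
        exact mul_le_mul hu hv hnn hnn2

lemma finprod_wgt_nonneg {m l s t : ℤ} (hl : 1 ≤ l) (hs : 1 ≤ s) (ht : 1 ≤ t)
    {u v : Cell} {S : Set Cell} (hS : S ∈ LPath u v)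
    (hv1 : v.1 ≤ m) (hu2 : u.2 ≤ l + 1) :
    0 ≤ ∏ᶠ x ∈ S, ((hst m l s t x : ℤ) : ℝ)⁻¹ := by
  have hfin := lpath_mem_finite hS
  rw [finprod_mem_eq_finite_toFinset_prod _ hfin]
  apply Finset.prod_nonneg
  intro x hx
  have hb := lpath_bounds hS x (hfin.mem_toFinset.mp hx)
  exact le_of_lt (inv_pos.mpr (hst_real_pos hl hs ht (by omega) (by omega)))

lemma pathSum_wgt_nonneg {m l s t : ℤ} (hl : 1 ≤ l) (hs : 1 ≤ s) (ht : 1 ≤ t)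
    {u v : Cell} (hv1 : v.1 ≤ m) (hu2 : u.2 ≤ l + 1) :
    0 ≤ ∑ᶠ S ∈ LPath u v, ∏ᶠ x ∈ S, ((hst m l s t x : ℤ) : ℝ)⁻¹ := by
  rw [finsum_mem_eq_finite_toFinset_sum _ (lpath_finite u v)]
  apply Finset.sum_nonneg
  intro S hS
  exact finprod_wgt_nonneg hl hs ht ((lpath_finite u v).mem_toFinset.mp hS) hv1 hu2

lemma tsum_subtype_lpath (u v : Cell) (F : Set Cell → ℝ) :
    ∑' (S : ↥(LPath u v)), F ↑S = ∑ᶠ S ∈ LPath u v, F S := by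
  haveI := (lpath_finite u v).to_subtype
  rw [tsum_eq_finsum (Set.toFinite _)]
  exact finsum_set_coe_eq_finsum_mem (LPath u v)

lemma summable_pow_seq (l : ℕ) : Summable (fun i : ℕ => ((l : ℝ) / ((i : ℝ) + 1)) ^ 2) := by
  have base : Summable (fun n : ℕ => 1 / ((n : ℝ) + 1) ^ 2) := by
    have h2 : Summable (fun n : ℕ => 1 / (n : ℝ) ^ 2) :=
      Real.summable_one_div_nat_pow.mpr one_lt_two
    have := (summable_nat_add_iff (f := fun n : ℕ => 1 / (n : ℝ) ^ 2) 1).mpr h2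
    apply this.congr
    intro n
    push_cast
    ring
  have := base.mul_left ((l : ℝ) ^ 2)
  apply this.congr
  intro n
  rw [div_pow, mul_one_div]

/-- The core summability lemma for column sums of path weights. -/
lemma key_summable (l m s t : ℕ) (hl : 1 ≤ l) (hs : 1 ≤ s) (ht : 1 ≤ t)
    (a₀ m' b : ℤ) (ha : 1 ≤ a₀) (hm' : m' ≤ (m : ℤ)) (hb : b ≤ (l : ℤ) + 1)
    (hne : a₀ ≠ m' ∨ b ≠ (l : ℤ) + 1) :
    Summable (fun i : ℕ => ∑ᶠ S ∈ LPath (a₀, (l : ℤ) + 1 - (i : ℤ)) (m', b - (i : ℤ)),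
      ∏ᶠ x ∈ S, ((hst (m : ℤ) (l : ℤ) (s : ℤ) (t : ℤ) x : ℤ) : ℝ)⁻¹) := by
  have hlz : (1 : ℤ) ≤ (l : ℤ) := by exact_mod_cast hl
  have hsz : (1 : ℤ) ≤ (s : ℤ) := by exact_mod_cast hs
  have htz : (1 : ℤ) ≤ (t : ℤ) := by exact_mod_cast ht
  set N : ℕ := (LPath ((a₀, (l : ℤ) + 1)) ((m', b))).ncard with hN
  have hcard : ∀ i : ℕ,
      (LPath (a₀, (l : ℤ) + 1 - (i : ℤ)) (m', b - (i : ℤ))).ncard = N := by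
    intro i
    have he : ((a₀, (l : ℤ) + 1 - (i : ℤ)) : Cell) = (a₀, (l : ℤ) + 1) + (0, -(i : ℤ)) := by
      ext <;> simp [sub_eq_add_neg]
    have he2 : ((m', b - (i : ℤ)) : Cell) = (m', b) + (0, -(i : ℤ)) := by
      ext <;> simp [sub_eq_add_neg]
    rw [he, he2, lpath_shift_eq]
    rw [Set.ncard_image_of_injective _
      (Set.image_injective.mpr (fun x y hxy => by simpa using congrArg (· + ((0 : ℤ), (i : ℤ))) hxy))]
  apply Summable.of_nonneg_of_le
    (fun i => pathSum_wgt_nonneg hlz hsz htz hm' (by simp; try omega))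
    (fun i => ?_) ((summable_pow_seq l).mul_left (N : ℝ))
  have hfin := lpath_finite ((a₀, (l : ℤ) + 1 - (i : ℤ)) : Cell) ((m', b - (i : ℤ)) : Cell)
  rw [finsum_mem_eq_finite_toFinset_sum _ hfin]
  have hbd : ∀ S ∈ hfin.toFinset,
      (∏ᶠ x ∈ S, ((hst (m : ℤ) (l : ℤ) (s : ℤ) (t : ℤ) x : ℤ) : ℝ)⁻¹)
        ≤ ((l : ℝ) / ((i : ℝ) + 1)) ^ 2 := by
    intro S hS
    have hSm := hfin.mem_toFinset.mp hS
    have hne' : ((a₀, (l : ℤ) + 1 - (i : ℤ)) : Cell) ≠ (m', b - (i : ℤ)) := by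
      rcases hne with hne | hne
      · intro hcon
        exact hne (congrArg Prod.fst hcon)
      · intro hcon
        have h2 := congrArg Prod.snd hcon
        exact hne (by omega)
    exact finprod_wgt_le hlz hsz htz hSm hm' (by simp; try omega) hne'
      (by positivity) (by simp) (by simp; try omega)
  calc (∑ S ∈ hfin.toFinset,
        ∏ᶠ x ∈ S, ((hst (m : ℤ) (l : ℤ) (s : ℤ) (t : ℤ) x : ℤ) : ℝ)⁻¹)
      ≤ hfin.toFinset.card • (((l : ℝ) / ((i : ℝ) + 1)) ^ 2) :=
        Finset.sum_le_card_nsmul _ _ _ hbd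
    _ = (N : ℝ) * ((l : ℝ) / ((i : ℝ) + 1)) ^ 2 := by
        rw [nsmul_eq_mul]
        congr 1
        have hc : hfin.toFinset.card = N := by
          rw [← hcard i]
          exact (Set.ncard_eq_toFinset_card _ hfin).symm
        exact_mod_cast hc

end CylAux2


section CylAux3

open Set Function

/-- Abbreviation: the weighted path sum with `hst` weights. -/
noncomputable def cylPS (l m s t : ℕ) (u v : Cell) : ℝ :=
  ∑ᶠ S ∈ LPath u v, ∏ᶠ x ∈ S, ((hst (m : ℤ) (l : ℤ) (s : ℤ) (t : ℤ) x : ℤ) : ℝ)⁻¹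

lemma key_summable' (l m s t : ℕ) (hl : 1 ≤ l) (hs : 1 ≤ s) (ht : 1 ≤ t)
    (a₀ m' b : ℤ) (ha : 1 ≤ a₀) (hm' : m' ≤ (m : ℤ)) (hb : b ≤ (l : ℤ) + 1)
    (hne : a₀ ≠ m' ∨ b ≠ (l : ℤ) + 1) :
    Summable (fun i : ℕ => cylPS l m s t (a₀, (l : ℤ) + 1 - (i : ℤ)) (m', b - (i : ℤ))) :=
  key_summable l m s t hl hs ht a₀ m' b ha hm' hb hne

lemma summable_FstTerm (l m s t : ℕ) (hl : 1 ≤ l) (hm : 1 ≤ m) (hs : 1 ≤ s) (ht : 1 ≤ t) :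
    Summable (FstTerm l m s t) ∧
    Summable (fun i : ℕ => cylPS l m s t ((1 : ℤ), (l : ℤ) + 1 - (i : ℤ)) ((m : ℤ), 1 - (i : ℤ))) ∧
    Fst l m s t
      = ∑' i : ℕ, cylPS l m s t ((1 : ℤ), (l : ℤ) + 1 - (i : ℤ)) ((m : ℤ), 1 - (i : ℤ)) := by
  have hlz : (1 : ℤ) ≤ (l : ℤ) := by exact_mod_cast hl
  have hsz : (1 : ℤ) ≤ (s : ℤ) := by exact_mod_cast hs
  have htz : (1 : ℤ) ≤ (t : ℤ) := by exact_mod_cast ht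
  have hnn : ∀ z : FstIndex l m, 0 ≤ FstTerm l m s t z := by
    rintro ⟨i, S, hS⟩
    exact finprod_wgt_nonneg hlz hsz htz hS (by simp) (by simp)
  have hfib : ∀ i : ℕ, Summable (fun p : ↥(LPath ((1 : ℤ), (l : ℤ) + 1 - (i : ℤ))
      ((m : ℤ), 1 - (i : ℤ))) => FstTerm l m s t ⟨i, p⟩) := by
    intro i
    haveI := (lpath_finite ((1 : ℤ), (l : ℤ) + 1 - (i : ℤ)) ((m : ℤ), 1 - (i : ℤ))).to_subtype
    exact Summable.of_finite
  have hfibeq : ∀ i : ℕ, (∑' p : ↥(LPath ((1 : ℤ), (l : ℤ) + 1 - (i : ℤ))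
        ((m : ℤ), 1 - (i : ℤ))), FstTerm l m s t ⟨i, p⟩)
      = cylPS l m s t ((1 : ℤ), (l : ℤ) + 1 - (i : ℤ)) ((m : ℤ), 1 - (i : ℤ)) := by
    intro i
    have h := tsum_subtype_lpath ((1 : ℤ), (l : ℤ) + 1 - (i : ℤ)) ((m : ℤ), 1 - (i : ℤ))
      (fun S => ∏ᶠ x ∈ S, ((hst (m : ℤ) (l : ℤ) (s : ℤ) (t : ℤ) x : ℤ) : ℝ)⁻¹)
    exact h
  have hseq : Summable (fun i : ℕ =>
      cylPS l m s t ((1 : ℤ), (l : ℤ) + 1 - (i : ℤ)) ((m : ℤ), 1 - (i : ℤ))) :=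
    key_summable' l m s t hl hs ht 1 (m : ℤ) 1 le_rfl le_rfl (by omega) (by omega)
  have hsum : Summable (FstTerm l m s t) := by
    apply (summable_sigma_of_nonneg hnn).mpr
    exact ⟨hfib, hseq.congr (fun i => (hfibeq i).symm)⟩
  refine ⟨hsum, hseq, ?_⟩
  have h := Summable.tsum_sigma' hfib hsum
  exact h.trans (tsum_congr hfibeq)

lemma hst_shift (m l s t : ℤ) (x : Cell) :
    hst (m - 1) l s t x = hst m l s t (x + (1, 0)) := by
  unfold hst
  simp only [Prod.fst_add, Prod.snd_add]
  ring_nf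

lemma hst_ms (m l s t : ℤ) (x : Cell) :
    hst (m - 1) l (s + 1) t x = hst m l s t x := by
  unfold hst
  ring

lemma hst_diff (m l s t : ℤ) (hl : 1 ≤ l) (i : ℤ) :
    hst m l s t ((m : ℤ), 1 - i) - hst m l s t (1, l + 1 - i) = t - m + 1 := by
  rw [hst_eval, hst_eval]
  have e1 : (l + 1 - ((m : ℤ), 1 - i).2) = i + l := by simp; ring
  have e2 : (l + 1 - (((1 : ℤ), l + 1 - i) : Cell).2) = i := by simp
  rw [e1, e2]
  have m1 : (i + l) % l = i % l := by
    simpa using Int.add_mul_emod_self_left (a := i) (b := l) (c := 1)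
  have d1 : (i + l) / l = i / l + 1 := by
    have := Int.add_mul_ediv_right i 1 (show l ≠ 0 by omega)
    simpa using this
  rw [m1, d1]
  simp only [show (((m : ℤ), 1 - i) : Cell).1 = m from rfl,
    show (((1 : ℤ), l + 1 - i) : Cell).1 = 1 from rfl]
  ring

lemma C0_eq (l m s t : ℕ) (hl : 1 ≤ l) :
    cylPS l m s t ((1 : ℤ), (l : ℤ) + 1) ((m : ℤ), 2) = Fσ l m s := by
  unfold cylPS Fσ
  apply finsum_mem_congr rfl
  intro S hS
  apply finprod_mem_congr rfl
  intro x hx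
  have hb := lpath_bounds hS x hx
  simp only [] at hb
  have hb2 : 2 ≤ x.2 ∧ x.2 ≤ (l : ℤ) + 1 := by
    constructor
    · exact hb.2.2.1
    · exact hb.2.2.2
  have h1 : ((l : ℤ) + 1 - x.2) % (l : ℤ) = (l : ℤ) + 1 - x.2 :=
    Int.emod_eq_of_lt (by omega) (by omega)
  have h2 : ((l : ℤ) + 1 - x.2) / (l : ℤ) = 0 :=
    Int.ediv_eq_zero_of_lt (by omega) (by omega)
  rw [hst_eval, h1, h2]
  congr 1
  push_cast
  ring

end CylAux3

/-- **Lemma 7.7 (recursion)**: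
`(t−m+1)·F_{(ℓ,m;s,t)} = F_{(ℓ,m;s)} + F_{(ℓ,m−1;s+1,t)} − F_{(ℓ,m−1;s,t)}`,
all three infinite sums being convergent. -/
theorem Fst_recursion (l m s t : ℕ) (hl : 1 ≤ l) (hm : 2 ≤ m) (hs : 1 ≤ s) (ht : 1 ≤ t) :
    Summable (FstTerm l m s t) ∧
    Summable (FstTerm l (m - 1) (s + 1) t) ∧
    Summable (FstTerm l (m - 1) s t) ∧
    ((t : ℝ) - (m : ℝ) + 1) * Fst l m s t =
      Fσ l m s + Fst l (m - 1) (s + 1) t - Fst l (m - 1) s t := by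
  have hlz : (1 : ℤ) ≤ (l : ℤ) := by exact_mod_cast hl
  have hsz : (1 : ℤ) ≤ (s : ℤ) := by exact_mod_cast hs
  have htz : (1 : ℤ) ≤ (t : ℤ) := by exact_mod_cast ht
  obtain ⟨sumA, SA, fstA⟩ := summable_FstTerm l m s t hl (by omega) hs ht
  obtain ⟨sumB, SB0, fstB⟩ := summable_FstTerm l (m - 1) (s + 1) t hl (by omega) (by omega) ht
  obtain ⟨sumD, SD0, fstD⟩ := summable_FstTerm l (m - 1) s t hl (by omega) hs ht
  refine ⟨sumA, sumB, sumD, ?_⟩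
  have hm1 : ((m - 1 : ℕ) : ℤ) = (m : ℤ) - 1 := by omega
  have hs1 : ((s + 1 : ℕ) : ℤ) = (s : ℤ) + 1 := by push_cast; ring
  -- translation for the B sequence
  have hBtrans : ∀ i : ℕ,
      cylPS l (m - 1) (s + 1) t ((1 : ℤ), (l : ℤ) + 1 - (i : ℤ)) (((m - 1 : ℕ) : ℤ), 1 - (i : ℤ))
        = cylPS l m s t ((1 : ℤ), (l : ℤ) + 1 - (i : ℤ)) ((m : ℤ) - 1, 1 - (i : ℤ)) := by
    intro i
    unfold cylPS
    rw [hm1, hs1]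
    simp only [hst_ms]
  have SB : Summable (fun i : ℕ =>
      cylPS l m s t ((1 : ℤ), (l : ℤ) + 1 - (i : ℤ)) ((m : ℤ) - 1, 1 - (i : ℤ))) :=
    SB0.congr hBtrans
  have tsumB : Fst l (m - 1) (s + 1) t
      = ∑' i : ℕ, cylPS l m s t ((1 : ℤ), (l : ℤ) + 1 - (i : ℤ)) ((m : ℤ) - 1, 1 - (i : ℤ)) :=
    fstB.trans (tsum_congr hBtrans)
  -- translation for the D sequence
  have hDtrans : ∀ i : ℕ,
      cylPS l (m - 1) s t ((1 : ℤ), (l : ℤ) + 1 - (i : ℤ)) (((m - 1 : ℕ) : ℤ), 1 - (i : ℤ))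
        = cylPS l m s t ((2 : ℤ), (l : ℤ) + 1 - (i : ℤ)) ((m : ℤ), 1 - (i : ℤ)) := by
    intro i
    unfold cylPS
    rw [hm1]
    simp only [hst_shift]
    have hshift := pathSum_shift ((1 : ℤ), (l : ℤ) + 1 - (i : ℤ)) ((m : ℤ) - 1, 1 - (i : ℤ)) (1, 0)
      (fun x => ((hst (m : ℤ) (l : ℤ) (s : ℤ) (t : ℤ) x : ℤ) : ℝ)⁻¹)
    beta_reduce at hshift
    rw [← hshift]
    have hp1 : (((1 : ℤ), (l : ℤ) + 1 - (i : ℤ)) : Cell) + (1, 0)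
        = ((2 : ℤ), (l : ℤ) + 1 - (i : ℤ)) := by
      rw [Prod.mk_add_mk]; congr 1 <;> omega
    have hp2 : (((m : ℤ) - 1, 1 - (i : ℤ)) : Cell) + (1, 0) = ((m : ℤ), 1 - (i : ℤ)) := by
      rw [Prod.mk_add_mk]; congr 1 <;> omega
    rw [hp1, hp2]
  have SD : Summable (fun i : ℕ =>
      cylPS l m s t ((2 : ℤ), (l : ℤ) + 1 - (i : ℤ)) ((m : ℤ), 1 - (i : ℤ))) :=
    SD0.congr hDtrans
  have tsumD : Fst l (m - 1) s t
      = ∑' i : ℕ, cylPS l m s t ((2 : ℤ), (l : ℤ) + 1 - (i : ℤ)) ((m : ℤ), 1 - (i : ℤ)) :=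
    fstD.trans (tsum_congr hDtrans)
  -- C and E sequences
  have SC : Summable (fun i : ℕ =>
      cylPS l m s t ((1 : ℤ), (l : ℤ) + 1 - (i : ℤ)) ((m : ℤ), 2 - (i : ℤ))) :=
    key_summable' l m s t hl hs ht 1 (m : ℤ) 2 le_rfl (by omega) (by omega) (by omega)
  have hEC : ∀ i : ℕ,
      cylPS l m s t ((1 : ℤ), (l : ℤ) + 1 - (i : ℤ) + -1) ((m : ℤ), 1 - (i : ℤ))
        = cylPS l m s t ((1 : ℤ), (l : ℤ) + 1 - ((i + 1 : ℕ) : ℤ)) ((m : ℤ), 2 - ((i + 1 : ℕ) : ℤ)) := by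
    intro i
    have hp1 : (((1 : ℤ), (l : ℤ) + 1 - ((i + 1 : ℕ) : ℤ)) : Cell)
        = ((1 : ℤ), (l : ℤ) + 1 - (i : ℤ) + -1) := by
      congr 1; push_cast; ring
    have hp2 : (((m : ℤ), 2 - ((i + 1 : ℕ) : ℤ)) : Cell) = ((m : ℤ), 1 - (i : ℤ)) := by
      congr 1; push_cast; ring
    rw [hp1, hp2]
  have SE : Summable (fun i : ℕ =>
      cylPS l m s t ((1 : ℤ), (l : ℤ) + 1 - (i : ℤ) + -1) ((m : ℤ), 1 - (i : ℤ))) := by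
    have h1 : Summable (fun i : ℕ =>
        cylPS l m s t ((1 : ℤ), (l : ℤ) + 1 - ((i + 1 : ℕ) : ℤ)) ((m : ℤ), 2 - ((i + 1 : ℕ) : ℤ))) :=
      (summable_nat_add_iff 1).mpr SC
    exact h1.congr (fun i => (hEC i).symm)
  have tsumCE : (∑' i : ℕ, cylPS l m s t ((1 : ℤ), (l : ℤ) + 1 - (i : ℤ)) ((m : ℤ), 2 - (i : ℤ)))
      = cylPS l m s t ((1 : ℤ), (l : ℤ) + 1) ((m : ℤ), 2)
        + ∑' i : ℕ, cylPS l m s t ((1 : ℤ), (l : ℤ) + 1 - (i : ℤ) + -1) ((m : ℤ), 1 - (i : ℤ)) := by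
    have h0 := Summable.tsum_eq_zero_add SC
    have e0 : cylPS l m s t ((1 : ℤ), (l : ℤ) + 1 - ((0 : ℕ) : ℤ)) ((m : ℤ), 2 - ((0 : ℕ) : ℤ))
        = cylPS l m s t ((1 : ℤ), (l : ℤ) + 1) ((m : ℤ), 2) := by norm_num
    have e1 : (∑' i : ℕ, cylPS l m s t ((1 : ℤ), (l : ℤ) + 1 - ((i + 1 : ℕ) : ℤ))
          ((m : ℤ), 2 - ((i + 1 : ℕ) : ℤ)))
        = ∑' i : ℕ, cylPS l m s t ((1 : ℤ), (l : ℤ) + 1 - (i : ℤ) + -1) ((m : ℤ), 1 - (i : ℤ)) :=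
      tsum_congr (fun i => (hEC i).symm)
    rw [h0, e0, e1]
  -- the per-index identity
  have key : ∀ i : ℕ,
      (cylPS l m s t ((1 : ℤ), (l : ℤ) + 1 - (i : ℤ)) ((m : ℤ) - 1, 1 - (i : ℤ))
        + cylPS l m s t ((1 : ℤ), (l : ℤ) + 1 - (i : ℤ)) ((m : ℤ), 2 - (i : ℤ)))
      - (cylPS l m s t ((2 : ℤ), (l : ℤ) + 1 - (i : ℤ)) ((m : ℤ), 1 - (i : ℤ))
        + cylPS l m s t ((1 : ℤ), (l : ℤ) + 1 - (i : ℤ) + -1) ((m : ℤ), 1 - (i : ℤ)))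
      = ((t : ℝ) - (m : ℝ) + 1)
          * cylPS l m s t ((1 : ℤ), (l : ℤ) + 1 - (i : ℤ)) ((m : ℤ), 1 - (i : ℤ)) := by
    intro i
    have huv : (((1 : ℤ), (l : ℤ) + 1 - (i : ℤ)) : Cell) ≠ ((m : ℤ), 1 - (i : ℤ)) := by
      intro hcon
      have h1 := congrArg Prod.fst hcon
      simp at h1
      omega
    have hvpos : (0 : ℝ) < ((hst (m : ℤ) (l : ℤ) (s : ℤ) (t : ℤ) ((m : ℤ), 1 - (i : ℤ)) : ℤ) : ℝ) :=
      hst_real_pos hlz hsz htz (by simp) (by simp; omega)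
    have hupos : (0 : ℝ)
        < ((hst (m : ℤ) (l : ℤ) (s : ℤ) (t : ℤ) ((1 : ℤ), (l : ℤ) + 1 - (i : ℤ)) : ℤ) : ℝ) :=
      hst_real_pos hlz hsz htz (by simp; omega) (by simp)
    have hlast := pathSum_last
      (fun x => ((hst (m : ℤ) (l : ℤ) (s : ℤ) (t : ℤ) x : ℤ) : ℝ)⁻¹) huv
    beta_reduce at hlast
    have hp1 : (((m : ℤ), 1 - (i : ℤ)) : Cell) - (1, 0) = ((m : ℤ) - 1, 1 - (i : ℤ)) := by
      rw [Prod.mk_sub_mk]; congr 1 <;> omega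
    have hp2 : (((m : ℤ), 1 - (i : ℤ)) : Cell) + (0, 1) = ((m : ℤ), 2 - (i : ℤ)) := by
      rw [Prod.mk_add_mk]; congr 1 <;> omega
    rw [hp1, hp2] at hlast
    have hfirst := pathSum_first
      (fun x => ((hst (m : ℤ) (l : ℤ) (s : ℤ) (t : ℤ) x : ℤ) : ℝ)⁻¹) huv
    beta_reduce at hfirst
    have hp3 : (((1 : ℤ), (l : ℤ) + 1 - (i : ℤ)) : Cell) + (1, 0)
        = ((2 : ℤ), (l : ℤ) + 1 - (i : ℤ)) := by
      rw [Prod.mk_add_mk]; congr 1 <;> omega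
    have hp4 : (((1 : ℤ), (l : ℤ) + 1 - (i : ℤ)) : Cell) + (0, -1)
        = ((1 : ℤ), (l : ℤ) + 1 - (i : ℤ) + -1) := by
      rw [Prod.mk_add_mk]; congr 1 <;> omega
    rw [hp3, hp4] at hfirst
    unfold cylPS
    have hBC : (∑ᶠ S ∈ LPath (((1 : ℤ), (l : ℤ) + 1 - (i : ℤ)) : Cell) ((m : ℤ) - 1, 1 - (i : ℤ)),
          ∏ᶠ x ∈ S, ((hst (m : ℤ) (l : ℤ) (s : ℤ) (t : ℤ) x : ℤ) : ℝ)⁻¹)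
        + (∑ᶠ S ∈ LPath (((1 : ℤ), (l : ℤ) + 1 - (i : ℤ)) : Cell) ((m : ℤ), 2 - (i : ℤ)),
          ∏ᶠ x ∈ S, ((hst (m : ℤ) (l : ℤ) (s : ℤ) (t : ℤ) x : ℤ) : ℝ)⁻¹)
        = ((hst (m : ℤ) (l : ℤ) (s : ℤ) (t : ℤ) ((m : ℤ), 1 - (i : ℤ)) : ℤ) : ℝ)
          * ∑ᶠ S ∈ LPath (((1 : ℤ), (l : ℤ) + 1 - (i : ℤ)) : Cell) ((m : ℤ), 1 - (i : ℤ)),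
            ∏ᶠ x ∈ S, ((hst (m : ℤ) (l : ℤ) (s : ℤ) (t : ℤ) x : ℤ) : ℝ)⁻¹ := by
      rw [hlast, ← mul_assoc, mul_inv_cancel₀ (ne_of_gt hvpos), one_mul]
    have hDE : (∑ᶠ S ∈ LPath (((2 : ℤ), (l : ℤ) + 1 - (i : ℤ)) : Cell) ((m : ℤ), 1 - (i : ℤ)),
          ∏ᶠ x ∈ S, ((hst (m : ℤ) (l : ℤ) (s : ℤ) (t : ℤ) x : ℤ) : ℝ)⁻¹)
        + (∑ᶠ S ∈ LPath (((1 : ℤ), (l : ℤ) + 1 - (i : ℤ) + -1) : Cell) ((m : ℤ), 1 - (i : ℤ)),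
          ∏ᶠ x ∈ S, ((hst (m : ℤ) (l : ℤ) (s : ℤ) (t : ℤ) x : ℤ) : ℝ)⁻¹)
        = ((hst (m : ℤ) (l : ℤ) (s : ℤ) (t : ℤ) ((1 : ℤ), (l : ℤ) + 1 - (i : ℤ)) : ℤ) : ℝ)
          * ∑ᶠ S ∈ LPath (((1 : ℤ), (l : ℤ) + 1 - (i : ℤ)) : Cell) ((m : ℤ), 1 - (i : ℤ)),
            ∏ᶠ x ∈ S, ((hst (m : ℤ) (l : ℤ) (s : ℤ) (t : ℤ) x : ℤ) : ℝ)⁻¹ := by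
      rw [hfirst, ← mul_assoc, mul_inv_cancel₀ (ne_of_gt hupos), one_mul]
    rw [hBC, hDE]
    have hz := hst_diff (m : ℤ) (l : ℤ) (s : ℤ) (t : ℤ) hlz (i : ℤ)
    have hab : ((hst (m : ℤ) (l : ℤ) (s : ℤ) (t : ℤ) ((m : ℤ), 1 - (i : ℤ)) : ℤ) : ℝ)
        - ((hst (m : ℤ) (l : ℤ) (s : ℤ) (t : ℤ) ((1 : ℤ), (l : ℤ) + 1 - (i : ℤ)) : ℤ) : ℝ)
        = (t : ℝ) - (m : ℝ) + 1 := by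
      exact_mod_cast hz
    rw [← sub_mul, hab]
  -- assemble
  rw [fstA, tsumB, tsumD]
  have main : ((t : ℝ) - (m : ℝ) + 1)
      * (∑' i : ℕ, cylPS l m s t ((1 : ℤ), (l : ℤ) + 1 - (i : ℤ)) ((m : ℤ), 1 - (i : ℤ)))
      = ((∑' i : ℕ, cylPS l m s t ((1 : ℤ), (l : ℤ) + 1 - (i : ℤ)) ((m : ℤ) - 1, 1 - (i : ℤ)))
          + ∑' i : ℕ, cylPS l m s t ((1 : ℤ), (l : ℤ) + 1 - (i : ℤ)) ((m : ℤ), 2 - (i : ℤ)))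
        - ((∑' i : ℕ, cylPS l m s t ((2 : ℤ), (l : ℤ) + 1 - (i : ℤ)) ((m : ℤ), 1 - (i : ℤ)))
          + ∑' i : ℕ, cylPS l m s t ((1 : ℤ), (l : ℤ) + 1 - (i : ℤ) + -1) ((m : ℤ), 1 - (i : ℤ))) := by
    rw [← tsum_mul_left, tsum_congr (fun i => (key i).symm),
      Summable.tsum_sub (SB.add SC) (SD.add SE), Summable.tsum_add SB SC, Summable.tsum_add SD SE]
  have hC0 := C0_eq l m s t hl
  linarith [main, tsumCE, hC0]
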